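/- If m and n are relatively prime odd positive integers, then for every integer k one has G_k(mn) = G_k(m) G_k(n). -/

import Mathlib

open Complex

/-- The Gauss-type sum `G_k(n)` of Soundararajan. -/
noncomputable def Gsum (k : ℤ) (n : ℕ) : ℂ :=
  ((1 - I) / 2 + (jacobiSym (-1) n : ℂ) * (1 + I) / 2) *
    ∑ a ∈ Finset.range n, (jacobiSym (a : ℤ) n : ℂ) *
      Complex.exp (2 * Real.pi * I * a * k / n)

/-- The sum part of `Gsum`. -/
noncomputable def Tsum (k : ℤ) (n : ℕ) : ℂ :=
  ∑ a ∈ Finset.range n, (jacobiSym (a : ℤ) n : ℂ) *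
      Complex.exp (2 * Real.pi * I * a * k / n)

/-- The epsilon factor of `Gsum`. -/
noncomputable def Geps (n : ℕ) : ℂ :=
  (1 - I) / 2 + (jacobiSym (-1) n : ℂ) * (1 + I) / 2

lemma Gsum_eq (k : ℤ) (n : ℕ) : Gsum k n = Geps n * Tsum k n := rfl

/-- The summand, as a function of a natural number, only depends on the residue mod `n`. -/
lemma term_mod (k : ℤ) (N : ℕ) (hN : N ≠ 0) (a : ℕ) :
    (jacobiSym ((a % N : ℕ) : ℤ) N : ℂ) *
      Complex.exp (2 * Real.pi * I * ((a % N : ℕ) : ℂ) * k / N)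
    = (jacobiSym (a : ℤ) N : ℂ) * Complex.exp (2 * Real.pi * I * a * k / N) := by
  have hNC : (N : ℂ) ≠ 0 := Nat.cast_ne_zero.mpr hN
  have h2 : jacobiSym ((a % N : ℕ) : ℤ) N = jacobiSym (a : ℤ) N := by
    rw [show ((a % N : ℕ) : ℤ) = (a : ℤ) % (N : ℤ) by push_cast; ring, ← jacobiSym.mod_left]
  have hdm : a = N * (a / N) + a % N := (Nat.div_add_mod a N).symm
  set q := a / N with hq
  set r := a % N with hr
  have hcast : (a : ℂ) = (N : ℂ) * q + r := by rw [hdm]; push_cast; ring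
  have h3 : Complex.exp (2 * Real.pi * I * (r : ℂ) * k / N)
      = Complex.exp (2 * Real.pi * I * a * k / N) := by
    rw [hcast, show 2 * (Real.pi : ℂ) * I * ((N : ℂ) * q + r) * k / N
        = (((q : ℤ) * k : ℤ) : ℂ) * (2 * Real.pi * I) + 2 * Real.pi * I * (r : ℂ) * k / N by
      push_cast; field_simp, Complex.exp_add, Complex.exp_int_mul_two_pi_mul_I, one_mul]
  rw [h2, h3]

/-- Rewrite `Tsum` as a sum over `ZMod n`. -/
lemma Tsum_eq_sum_zmod (k : ℤ) (N : ℕ) [NeZero N] :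
    Tsum k N = ∑ x : ZMod N, (jacobiSym (x.val : ℤ) N : ℂ) *
      Complex.exp (2 * Real.pi * I * (x.val : ℂ) * k / N) := by
  rw [Tsum]
  refine Finset.sum_nbij' (fun a => (a : ZMod N)) (fun x => x.val) ?_ ?_ ?_ ?_ ?_
  · intro a _; exact Finset.mem_univ _
  · intro x _; exact Finset.mem_range.mpr (ZMod.val_lt x)
  · intro a ha
    simp [ZMod.val_natCast, Nat.mod_eq_of_lt (Finset.mem_range.mp ha)]
  · intro x _
    simp [ZMod.natCast_val, ZMod.cast_id]
  · intro a _
    simp only [ZMod.val_natCast]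
    exact (term_mod k N (NeZero.ne N) a).symm

/-- Twisted multiplicativity of the Gauss sum part. -/
lemma Tsum_mul (m n : ℕ) (hm1 : 1 ≤ m) (hn1 : 1 ≤ n) (hmn : Nat.Coprime m n) (k : ℤ) :
    Tsum k (m * n) = ((jacobiSym (n : ℤ) m * jacobiSym (m : ℤ) n : ℤ) : ℂ) *
      (Tsum k m * Tsum k n) := by
  haveI : NeZero m := ⟨by omega⟩
  haveI : NeZero n := ⟨by omega⟩
  haveI : NeZero (m * n) := ⟨by positivity⟩
  have hmC : (m : ℂ) ≠ 0 := Nat.cast_ne_zero.mpr (NeZero.ne m)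
  have hnC : (n : ℂ) ≠ 0 := Nat.cast_ne_zero.mpr (NeZero.ne n)
  set φ : ZMod m × ZMod n → ZMod (m * n) :=
    fun p => ((p.1.val * n + p.2.val * m : ℕ) : ZMod (m * n)) with hφ
  have hinj : Function.Injective φ := by
    intro p q h
    have hu_n : IsUnit ((n : ZMod m)) := (ZMod.isUnit_iff_coprime n m).mpr hmn.symm
    have hu_m : IsUnit ((m : ZMod n)) := (ZMod.isUnit_iff_coprime m n).mpr hmn
    have h1 := congrArg (ZMod.castHom (dvd_mul_right m n) (ZMod m)) h
    have h2 := congrArg (ZMod.castHom (dvd_mul_left n m) (ZMod n)) h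
    simp only [hφ, map_natCast] at h1 h2
    push_cast at h1 h2
    simp only [ZMod.natCast_val, ZMod.cast_id, ZMod.natCast_self, mul_zero, add_zero,
      zero_mul, zero_add] at h1 h2
    have e1 : p.1 = q.1 := hu_n.mul_right_cancel (by simpa using h1)
    have e2 : p.2 = q.2 := hu_m.mul_right_cancel (by simpa using h2)
    exact Prod.ext e1 e2
  have hbij : Function.Bijective φ := by
    rw [Fintype.bijective_iff_injective_and_card]
    exact ⟨hinj, by simp [ZMod.card]⟩
  rw [Tsum_eq_sum_zmod, Tsum_eq_sum_zmod, Tsum_eq_sum_zmod]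
  have hsum := Fintype.sum_bijective φ hbij
      (fun p => (jacobiSym (((φ p).val : ℤ)) (m * n) : ℂ) *
        Complex.exp (2 * Real.pi * I * ((φ p).val : ℂ) * k / ((m * n : ℕ) : ℂ)))
      (fun x => (jacobiSym ((x.val : ℤ)) (m * n) : ℂ) *
        Complex.exp (2 * Real.pi * I * (x.val : ℂ) * k / ((m * n : ℕ) : ℂ)))
      (fun p => rfl)
  rw [← hsum]
  have key : ∀ p : ZMod m × ZMod n,
      (jacobiSym ((φ p).val : ℤ) (m * n) : ℂ) *
        Complex.exp (2 * Real.pi * I * ((φ p).val : ℂ) * k / ((m * n : ℕ) : ℂ))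
      = ((jacobiSym (n : ℤ) m * jacobiSym (m : ℤ) n : ℤ) : ℂ) *
        ((jacobiSym (p.1.val : ℤ) m : ℂ) *
            Complex.exp (2 * Real.pi * I * (p.1.val : ℂ) * k / (m : ℂ)) *
          ((jacobiSym (p.2.val : ℤ) n : ℂ) *
            Complex.exp (2 * Real.pi * I * (p.2.val : ℂ) * k / (n : ℂ)))) := by
    intro p
    set a : ℕ := p.1.val * n + p.2.val * m with ha
    have hval : (φ p).val = a % (m * n) := ZMod.val_natCast (m * n) a
    rw [hval, term_mod k (m * n) (NeZero.ne _) a]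
    -- Jacobi symbol factorization
    have hJ : (jacobiSym (a : ℤ) (m * n) : ℤ)
        = (jacobiSym (n : ℤ) m * jacobiSym (m : ℤ) n)
          * (jacobiSym (p.1.val : ℤ) m * jacobiSym (p.2.val : ℤ) n) := by
      rw [jacobiSym.mul_right]
      have hJm : jacobiSym (a : ℤ) m = jacobiSym (p.1.val : ℤ) m * jacobiSym (n : ℤ) m := by
        have h : jacobiSym (a : ℤ) m = jacobiSym ((p.1.val : ℤ) * n) m := by
          apply jacobiSym.mod_left'
          push_cast [ha]
          rw [Int.add_mul_emod_self_right]
        rw [h, jacobiSym.mul_left]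
      have hJn : jacobiSym (a : ℤ) n = jacobiSym (p.2.val : ℤ) n * jacobiSym (m : ℤ) n := by
        have h : jacobiSym (a : ℤ) n = jacobiSym ((p.2.val : ℤ) * m) n := by
          apply jacobiSym.mod_left'
          push_cast [ha]
          rw [add_comm, Int.add_mul_emod_self_right]
        rw [h, jacobiSym.mul_left]
      rw [hJm, hJn]; ring
    -- exponential factorization
    have hE : Complex.exp (2 * Real.pi * I * (a : ℂ) * k / ((m * n : ℕ) : ℂ))
        = Complex.exp (2 * Real.pi * I * (p.1.val : ℂ) * k / (m : ℂ)) *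
          Complex.exp (2 * Real.pi * I * (p.2.val : ℂ) * k / (n : ℂ)) := by
      rw [← Complex.exp_add]
      congr 1
      push_cast [ha]
      field_simp
    rw [hE]
    push_cast [hJ]
    ring
  rw [Fintype.sum_congr _ _ key]
  rw [Fintype.sum_prod_type]
  simp only [Finset.mul_sum, Finset.sum_mul]
  exact Finset.sum_comm

/-- Multiplicativity of the epsilon factor against the reciprocity sign. -/
lemma Geps_mul (m n : ℕ) (hm : Odd m) (hn : Odd n) (hmn : Nat.Coprime m n) :
    Geps (m * n) * ((jacobiSym (n : ℤ) m * jacobiSym (m : ℤ) n : ℤ) : ℂ)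
      = Geps m * Geps n := by
  have hrec : jacobiSym (n : ℤ) m * jacobiSym (m : ℤ) n = (-1) ^ (n / 2 * (m / 2)) := by
    rw [jacobiSym.quadratic_reciprocity hn hm, mul_assoc, ← sq,
      jacobiSym.sq_one (by rwa [Int.gcd_natCast_natCast]), mul_one]
  have hJm : jacobiSym (-1 : ℤ) m = ZMod.χ₄ (m : ZMod 4) := jacobiSym.at_neg_one hm
  have hJn : jacobiSym (-1 : ℤ) n = ZMod.χ₄ (n : ZMod 4) := jacobiSym.at_neg_one hn
  have hJmn : jacobiSym (-1 : ℤ) (m * n) = ZMod.χ₄ ((m * n : ℕ) : ZMod 4) :=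
    jacobiSym.at_neg_one (hm.mul hn)
  have hm2 : m % 2 = 1 := Nat.odd_iff.mp hm
  have hn2 : n % 2 = 1 := Nat.odd_iff.mp hn
  have hm4 : m % 4 = 1 ∨ m % 4 = 3 := by omega
  have hn4 : n % 4 = 1 ∨ n % 4 = 3 := by omega
  unfold Geps
  rcases hm4 with h1 | h1 <;> rcases hn4 with h2 | h2
  · rw [hrec, hJm, hJn, hJmn, ZMod.χ₄_nat_one_mod_four h1, ZMod.χ₄_nat_one_mod_four h2,
      ZMod.χ₄_nat_one_mod_four (show (m * n) % 4 = 1 by rw [Nat.mul_mod, h1, h2]),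
      (Nat.even_mul.mpr (Or.inr (Nat.even_iff.mpr (by omega)))).neg_one_pow]
    push_cast; ring
  · rw [hrec, hJm, hJn, hJmn, ZMod.χ₄_nat_one_mod_four h1, ZMod.χ₄_nat_three_mod_four h2,
      ZMod.χ₄_nat_three_mod_four (show (m * n) % 4 = 3 by rw [Nat.mul_mod, h1, h2]),
      (Nat.even_mul.mpr (Or.inr (Nat.even_iff.mpr (by omega)))).neg_one_pow]
    push_cast; ring
  · rw [hrec, hJm, hJn, hJmn, ZMod.χ₄_nat_three_mod_four h1, ZMod.χ₄_nat_one_mod_four h2,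
      ZMod.χ₄_nat_three_mod_four (show (m * n) % 4 = 3 by rw [Nat.mul_mod, h1, h2]),
      (Nat.even_mul.mpr (Or.inl (Nat.even_iff.mpr (by omega)))).neg_one_pow]
    push_cast; ring
  · rw [hrec, hJm, hJn, hJmn, ZMod.χ₄_nat_three_mod_four h1, ZMod.χ₄_nat_three_mod_four h2,
      ZMod.χ₄_nat_one_mod_four (show (m * n) % 4 = 1 by rw [Nat.mul_mod, h1, h2]),
      ((Nat.odd_iff.mpr (by omega : n / 2 % 2 = 1)).mul
        (Nat.odd_iff.mpr (by omega : m / 2 % 2 = 1))).neg_one_pow]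
    push_cast
    linear_combination -Complex.I_sq

/-- The Gauss-type sum `G_k` is multiplicative in its (odd) argument. -/
theorem Gsum_mul (m n : ℕ) (hm : Odd m) (hn : Odd n) (hm1 : 1 ≤ m) (hn1 : 1 ≤ n)
    (hmn : Nat.Coprime m n) (k : ℤ) :
    Gsum k (m * n) = Gsum k m * Gsum k n := by
  rw [Gsum_eq, Gsum_eq, Gsum_eq, Tsum_mul m n hm1 hn1 hmn k,
    show Geps (m * n) * (((jacobiSym (n : ℤ) m * jacobiSym (m : ℤ) n : ℤ) : ℂ) *
      (Tsum k m * Tsum k n)) = (Geps (m * n) *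
      ((jacobiSym (n : ℤ) m * jacobiSym (m : ℤ) n : ℤ) : ℂ)) * (Tsum k m * Tsum k n) by ring,
    Geps_mul m n hm hn hmn]
  ring
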